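/- arXiv:2207.08047 — 2 statements merged into one kernel-verified Lean document; each statement's English description precedes it below -/
import Mathlib

section
/- Let f : [λ, R] → ℝ be a nonneg, increasing, absolutely continuous function with f(λ) ≥ 0, f(r) > 0 for r > λ, satisfying the differential inequality f(r) ≤ C·f'(r)^{n/(n-1)} for a.e. r ∈ (λ, R), where C > 0 and n ≥ 2. Then f(r) ≥ (C^{-(n-1)/n}/n)^n · (r - λ)^n for all r ∈ [λ, R]. -/
open MeasureTheory Set Filter Topology

lemma aux_deriv_nonneg (lam R : ℝ) (hlR : lam < R) (f f' : ℝ → ℝ)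
    (hmono : MonotoneOn f (Icc lam R))
    (hint : IntervalIntegrable f' volume lam R)
    (hFTC : ∀ x ∈ Icc lam R, f x = f lam + ∫ t in lam..x, f' t) :
    ∀ᵐ r ∂(volume.restrict (Ioo lam R)), 0 ≤ f' r := by
  set g : ℝ → ℝ := (Icc lam R).indicator f' with hg
  have hIoc : IntegrableOn f' (Ioc lam R) :=
    (intervalIntegrable_iff_integrableOn_Ioc_of_le hlR.le).1 hint
  have hIcc : IntegrableOn f' (Icc lam R) :=
    hIoc.congr_set_ae (Ioc_ae_eq_Icc (α := ℝ)).symm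
  have hgint : Integrable g := (integrable_indicator_iff measurableSet_Icc).2 hIcc
  have hloc : LocallyIntegrable g := hgint.locallyIntegrable
  have key := IsUnifLocDoublingMeasure.ae_tendsto_average (volume : Measure ℝ) hloc 1
  rw [ae_restrict_iff' measurableSet_Ioo]
  filter_upwards [key] with x hx hxI
  have hx' : Tendsto (fun d : ℝ => ⨍ y in Metric.closedBall x d, g y) (𝓝[>] (0:ℝ)) (𝓝 (g x)) := by
    refine hx (fun _ => x) id tendsto_id ?_
    filter_upwards [self_mem_nhdsWithin] with d hd
    exact Metric.mem_closedBall_self (by simpa using (le_of_lt (by simpa using hd : (0:ℝ) < d)))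
  have hgx : g x = f' x := indicator_of_mem (Ioo_subset_Icc_self hxI) f'
  rw [hgx] at hx'
  refine ge_of_tendsto hx' ?_
  have hm : (0:ℝ) < min (x - lam) (R - x) := by
    simp only [lt_min_iff]; constructor <;> [linarith [hxI.1]; linarith [hxI.2]]
  filter_upwards [Ioo_mem_nhdsGT_of_mem (show (0:ℝ) ∈ Ico 0 (min (x - lam) (R - x)) from ⟨le_rfl, hm⟩)]
    with d hd
  have hd0 : 0 < d := hd.1
  have hsub : Metric.closedBall x d ⊆ Icc lam R := by
    rw [Real.closedBall_eq_Icc]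
    apply Icc_subset_Icc
    · have := lt_min_iff.1 hd.2; linarith [this.1]
    · have := lt_min_iff.1 hd.2; linarith [this.2]
  have hxm : lam ≤ x - d := by have := lt_min_iff.1 hd.2; linarith [this.1]
  have hxM : x + d ≤ R := by have := lt_min_iff.1 hd.2; linarith [this.2]
  have hint1 : IntervalIntegrable f' volume lam (x - d) := by
    apply hint.mono_set
    rw [uIcc_of_le (by linarith), uIcc_of_le hlR.le]
    exact Icc_subset_Icc le_rfl (by linarith)
  have hint2 : IntervalIntegrable f' volume (x - d) (x + d) := by
    apply hint.mono_set
    rw [uIcc_of_le (by linarith), uIcc_of_le hlR.le]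
    exact Icc_subset_Icc hxm hxM
  have hval : ∫ y in Metric.closedBall x d, g y = f (x + d) - f (x - d) := by
    have h1 : ∫ y in Metric.closedBall x d, g y = ∫ y in Metric.closedBall x d, f' y :=
      setIntegral_congr_fun (by rw [Real.closedBall_eq_Icc]; exact measurableSet_Icc)
        (fun y hy => indicator_of_mem (hsub hy) f')
    rw [h1, Real.closedBall_eq_Icc, integral_Icc_eq_integral_Ioc,
      ← intervalIntegral.integral_of_le (by linarith : x - d ≤ x + d)]
    have e1 := hFTC (x + d) ⟨by linarith, hxM⟩
    have e2 := hFTC (x - d) ⟨hxm, by linarith⟩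
    have e3 := intervalIntegral.integral_add_adjacent_intervals hint1 hint2
    rw [e1, e2]; linarith [e3]
  have hnn : (0:ℝ) ≤ f (x + d) - f (x - d) := by
    have := hmono ⟨hxm, by linarith⟩ ⟨by linarith, hxM⟩ (by linarith : x - d ≤ x + d)
    linarith
  rw [setAverage_eq, hval]
  exact smul_nonneg (by positivity) hnn

set_option maxHeartbeats 1000000 in
/-- ODE lemma underlying the volume lower bound in the monotonicity inequality:
if `f` is nonnegative, increasing, absolutely continuous on `[λ, R]` (expressed via
an a.e. derivative `f'` and the fundamental theorem of calculus), positive for `r > λ`,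
and satisfies `f ≤ C · (f')^{n/(n-1)}` a.e., then `f r ≥ (C^{-(n-1)/n}/n)^n (r-λ)^n`. -/
theorem stmt0 (n : ℕ) (hn : 2 ≤ n) (lam R C : ℝ) (hlam : 0 ≤ lam) (hlR : lam < R)
    (hC : 0 < C) (f f' : ℝ → ℝ)
    (hmono : MonotoneOn f (Icc lam R))
    (hnonneg : ∀ r ∈ Icc lam R, 0 ≤ f r)
    (hpos : ∀ r ∈ Ioc lam R, 0 < f r)
    (hint : ∀ x ∈ Icc lam R, IntervalIntegrable f' volume lam x)
    (hFTC : ∀ x ∈ Icc lam R, f x = f lam + ∫ t in lam..x, f' t)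
    (hode : ∀ᵐ r ∂(volume.restrict (Ioo lam R)),
      f r ≤ C * (f' r) ^ ((n : ℝ) / ((n : ℝ) - 1))) :
    ∀ r ∈ Icc lam R,
      (C ^ (-(((n : ℝ) - 1)) / (n : ℝ)) / (n : ℝ)) ^ n * (r - lam) ^ n ≤ f r := by
  set N : ℝ := (n : ℝ) with hNdef
  clear_value N
  have hN2 : (2:ℝ) ≤ N := by rw [hNdef]; exact_mod_cast hn
  have hN0 : 0 < N := by linarith
  have hN1 : 1 < N := by linarith
  set a : ℝ := (N - 1) / N with hadef
  clear_value a
  have ha0 : 0 < a := by rw [hadef]; exact div_pos (by linarith) hN0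
  have ha1 : a < 1 := by rw [hadef, div_lt_one hN0]; linarith
  have haN : N * a = N - 1 := by rw [hadef]; field_simp
  set K : ℝ := C ^ (-a) / N with hKdef
  clear_value K
  have hK : 0 < K := by rw [hKdef]; exact div_pos (Real.rpow_pos_of_pos hC _) hN0
  set Kn : ℝ := K ^ N with hKndef
  clear_value Kn
  have hKn : 0 < Kn := by rw [hKndef]; exact Real.rpow_pos_of_pos hK _
  -- basic integrability facts
  have hintR : IntervalIntegrable f' volume lam R := hint R ⟨hlR.le, le_rfl⟩
  have hii : ∀ s t, s ∈ Icc lam R → t ∈ Icc lam R → IntervalIntegrable f' volume s t := by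
    intro s t hs ht
    refine hintR.mono_set ?_
    rw [← uIcc_of_le hlR.le] at hs ht
    exact uIcc_subset_uIcc hs ht
  have hf' := aux_deriv_nonneg lam R hlR f f' hmono hintR hFTC
  -- continuity of f
  have hcont : ContinuousOn f (Icc lam R) := by
    have h1 : IntegrableOn f' (uIcc lam R) := by
      rw [uIcc_of_le hlR.le]
      exact ((intervalIntegrable_iff_integrableOn_Ioc_of_le hlR.le).1 hintR).congr_set_ae
        (Ioc_ae_eq_Icc (α := ℝ)).symm
    have h2 := intervalIntegral.continuousOn_primitive_interval h1
    rw [uIcc_of_le hlR.le] at h2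
    exact (continuousOn_const.add h2).congr (fun x hx => hFTC x hx)
  -- FTC difference form
  have hsub : ∀ s t, s ∈ Icc lam R → t ∈ Icc lam R → f t - f s = ∫ u in s..t, f' u := by
    intro s t hs ht
    have e3 := intervalIntegral.integral_add_adjacent_intervals
      (hii lam s ⟨le_rfl, hlR.le⟩ hs) (hii s t hs ht)
    rw [hFTC t ht, hFTC s hs]
    linarith
  -- key a.e. inequality
  have hkey : ∀ᵐ u ∂(volume.restrict (Ioo lam R)), (f u / C) ^ a ≤ f' u := by
    filter_upwards [hode, hf', ae_restrict_mem measurableSet_Ioo] with u h1 h2 hu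
    have hfu : 0 ≤ f u := hnonneg u ⟨hu.1.le, hu.2.le⟩
    have h3 : f u / C ≤ (f' u) ^ (N / (N - 1)) := by
      rw [div_le_iff₀ hC]; linarith [h1]
    have h4 := Real.rpow_le_rpow (div_nonneg hfu hC.le) h3 ha0.le
    rwa [← Real.rpow_mul h2,
      (show N / (N - 1) * a = 1 by
        rw [hadef, div_mul_div_comm, mul_comm (N - 1) N]
        exact div_self (by nlinarith)), Real.rpow_one] at h4
  -- main part
  intro r hr
  rcases hr.1.eq_or_lt with heq | hlr
  · rw [← heq]
    simp only [sub_self]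
    rw [zero_pow (by omega : n ≠ 0), mul_zero]
    exact hnonneg lam ⟨le_rfl, hlR.le⟩
  -- now lam < r ≤ R
  have hrR : r ≤ R := hr.2
  have claim : ∀ s ∈ Ioo lam r, Kn * (r - s) ^ N ≤ f r := by
    intro s hs
    have hsR : s ≤ R := le_trans hs.2.le hrR
    have hsIcc : s ∈ Icc lam R := ⟨hs.1.le, hsR⟩
    have hfs : 0 < f s := hpos s ⟨hs.1, hsR⟩
    set ρ : ℝ := f s / Kn with hρdef
    clear_value ρ
    have hρ : 0 < ρ := by rw [hρdef]; exact div_pos hfs hKn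
    have main : ∀ k : ℕ, ∀ t ∈ Icc s r, Kn * ρ ^ (a ^ k) * (t - s) ^ (N * (1 - a ^ k)) ≤ f t := by
      intro k
      induction k with
      | zero =>
        intro t ht
        have htIcc : t ∈ Icc lam R := ⟨le_trans hs.1.le ht.1, le_trans ht.2 hrR⟩
        simp only [pow_zero, Real.rpow_one, sub_self, mul_zero, Real.rpow_zero, mul_one]
        have hKρ : Kn * ρ = f s := by rw [hρdef, mul_comm, div_mul_cancel₀ _ hKn.ne']
        rw [hKρ]
        exact hmono hsIcc htIcc ht.1
      | succ k ih =>
        intro t ht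
        have hst : s ≤ t := ht.1
        have htIcc : t ∈ Icc lam R := ⟨le_trans hs.1.le ht.1, le_trans ht.2 hrR⟩
        have hIccsub : Icc s t ⊆ Icc lam R := Icc_subset_Icc hs.1.le (le_trans ht.2 hrR)
        set e : ℝ := N * (1 - a ^ k) with hedef
        clear_value e
        set B : ℝ := Kn * ρ ^ (a ^ k) with hBdef
        clear_value B
        have hB0 : 0 < B := by rw [hBdef]; exact mul_pos hKn (Real.rpow_pos_of_pos hρ _)
        have hak1 : a ^ k ≤ 1 := pow_le_one₀ ha0.le ha1.le
        have he0 : 0 ≤ e := by rw [hedef]; exact mul_nonneg hN0.le (by linarith)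
        have hE : e * a + 1 = N * (1 - a ^ (k+1)) := by
          have h' : e * a = (N * a) * (1 - a ^ k) := by rw [hedef]; ring
          have h'' : N * (1 - a ^ (k+1)) = N - (N * a) * a ^ k := by rw [pow_succ]; ring
          rw [h', haN, h'', haN]; ring
        have hE0 : 0 < N * (1 - a ^ (k+1)) := by
          have h5 : a ^ (k+1) < 1 := pow_lt_one₀ ha0.le ha1 (by omega)
          have h' : 0 < 1 - a ^ (k+1) := by linarith
          positivity
        have hEpos : 0 < e * a + 1 := by rw [hE]; exact hE0
        -- integrability of the two comparison integrands
        have hInt2 : IntervalIntegrable (fun u => (f u / C) ^ a) volume s t := by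
          apply ContinuousOn.intervalIntegrable
          rw [uIcc_of_le hst]
          exact ((hcont.mono hIccsub).div_const C).rpow_const (fun x _ => Or.inr ha0.le)
        have hInt1 : IntervalIntegrable (fun u => (B * (u - s) ^ e / C) ^ a) volume s t := by
          apply ContinuousOn.intervalIntegrable
          apply ContinuousOn.rpow_const _ (fun x _ => Or.inr ha0.le)
          apply ContinuousOn.div_const
          exact continuousOn_const.mul ((continuousOn_id.sub continuousOn_const).rpow_const
            (fun x _ => Or.inr he0))
        have hIntf' : IntervalIntegrable f' volume s t := hii s t hsIcc htIcc
        -- step 1 : f s + ∫ (f/C)^a ≤ f t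
        have step1 : f s + ∫ u in s..t, (f u / C) ^ a ≤ f t := by
          have hft := hsub s t hsIcc htIcc
          have haeIcc : (fun u => (f u / C) ^ a) ≤ᵐ[volume.restrict (Icc s t)] f' := by
            have hres : volume.restrict (Icc s t) = volume.restrict (Ioo s t) :=
              (Measure.restrict_congr_set (Ioo_ae_eq_Icc (α := ℝ))).symm
            rw [hres]
            exact ae_restrict_of_ae_restrict_of_subset
              (Ioo_subset_Ioo hs.1.le (le_trans ht.2 hrR)) hkey
          have hmon := intervalIntegral.integral_mono_ae_restrict hst hInt2 hIntf' haeIcc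
          linarith
        -- step 2 : monotonicity of integral using ih
        have step2 : ∫ u in s..t, (B * (u - s) ^ e / C) ^ a ≤ ∫ u in s..t, (f u / C) ^ a := by
          apply intervalIntegral.integral_mono_on hst hInt1 hInt2
          intro u hu
          have hub : B * (u - s) ^ e ≤ f u := ih u ⟨hu.1, le_trans hu.2 ht.2⟩
          have hnn : 0 ≤ B * (u - s) ^ e / C := by
            apply div_nonneg _ hC.le
            exact mul_nonneg hB0.le (Real.rpow_nonneg (by linarith [hu.1]) _)
          exact Real.rpow_le_rpow hnn ((div_le_div_iff_of_pos_right hC).2 hub) ha0.le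
        -- step 3 : compute the integral
        have step3 : ∫ u in s..t, (B * (u - s) ^ e / C) ^ a
            = (B / C) ^ a * ((t - s) ^ (e * a + 1) / (e * a + 1)) := by
          have hEq : EqOn (fun u => (B * (u - s) ^ e / C) ^ a)
              (fun u => (B / C) ^ a * (u - s) ^ (e * a)) (uIcc s t) := by
            intro u hu
            rw [uIcc_of_le hst] at hu
            have hu0 : 0 ≤ u - s := by linarith [hu.1]
            simp only
            rw [show B * (u - s) ^ e / C = (B / C) * (u - s) ^ e by ring,
              Real.mul_rpow (div_nonneg hB0.le hC.le) (Real.rpow_nonneg hu0 _),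
              ← Real.rpow_mul hu0]
          rw [intervalIntegral.integral_congr hEq, intervalIntegral.integral_const_mul]
          congr 1
          have hcomp := intervalIntegral.integral_comp_sub_right
            (a := s) (b := t) (fun x => x ^ (e * a)) s
          rw [hcomp, sub_self,
            integral_rpow (Or.inl (by nlinarith [mul_nonneg he0 ha0.le] : (-1:ℝ) < e * a)),
            Real.zero_rpow (by positivity : e * a + 1 ≠ 0), sub_zero]
        -- step 4 : algebra
        have hBC : Kn * ρ ^ (a ^ (k+1)) ≤ (B / C) ^ a / (e * a + 1) := by
          have h1 : (B / C) ^ a = B ^ a / C ^ a := Real.div_rpow hB0.le hC.le a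
          have h2 : B ^ a = Kn ^ a * ρ ^ (a ^ (k+1)) := by
            rw [hBdef, Real.mul_rpow hKn.le (Real.rpow_pos_of_pos hρ _).le,
              ← Real.rpow_mul hρ.le, ← pow_succ]
          have h3 : Kn ^ a = Kn / K := by
            rw [hKndef, ← Real.rpow_mul hK.le, haN, Real.rpow_sub hK, Real.rpow_one]
          have hCa : (0:ℝ) < C ^ a := Real.rpow_pos_of_pos hC a
          have hρ' : (0:ℝ) < ρ ^ (a ^ (k+1)) := Real.rpow_pos_of_pos hρ _
          have hCaKN : C ^ a = (K * N)⁻¹ := by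
            rw [hKdef, div_mul_cancel₀ _ hN0.ne', Real.rpow_neg hC.le, inv_inv]
          rw [le_div_iff₀ hEpos, h1, h2, h3, hCaKN]
          have hX : Kn / K * ρ ^ (a ^ (k+1)) / (K * N)⁻¹ = Kn * ρ ^ (a ^ (k+1)) * N := by
            rw [div_eq_mul_inv _ (K * N)⁻¹, inv_inv]
            field_simp
          rw [hX]
          have hEN : e * a + 1 ≤ N := by
            rw [hE]
            exact mul_le_of_le_one_right hN0.le (by linarith [pow_pos ha0 (k+1)])
          have hKρ : 0 < Kn * ρ ^ (a ^ (k+1)) := mul_pos hKn hρ'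
          exact mul_le_mul_of_nonneg_left hEN hKρ.le
        calc Kn * ρ ^ (a ^ (k+1)) * (t - s) ^ (N * (1 - a ^ (k+1)))
            ≤ ((B / C) ^ a / (e * a + 1)) * (t - s) ^ (N * (1 - a ^ (k+1))) :=
              mul_le_mul_of_nonneg_right hBC (Real.rpow_nonneg (by linarith [ht.1]) _)
          _ = (B / C) ^ a * ((t - s) ^ (e * a + 1) / (e * a + 1)) := by rw [hE]; ring
          _ = ∫ u in s..t, (B * (u - s) ^ e / C) ^ a := step3.symm
          _ ≤ ∫ u in s..t, (f u / C) ^ a := step2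
          _ ≤ f t := by linarith [step1, hfs]
    -- limit k → ∞
    have h1 : Tendsto (fun k : ℕ => a ^ k) atTop (𝓝 0) :=
      tendsto_pow_atTop_nhds_zero_of_lt_one ha0.le ha1
    have h2 : Tendsto (fun k : ℕ => ρ ^ (a ^ k)) atTop (𝓝 1) := by
      have hc := (Real.continuousAt_const_rpow (a := ρ) (b := 0) hρ.ne').tendsto
      have := hc.comp h1
      simpa [Real.rpow_zero, Function.comp_def] using this
    have h3 : Tendsto (fun k : ℕ => (r - s) ^ (N * (1 - a ^ k))) atTop (𝓝 ((r - s) ^ N)) := by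
      have hrs : r - s ≠ 0 := by have := hs.2; intro h; rw [sub_eq_zero] at h; linarith
      have hc := (Real.continuousAt_const_rpow (a := r - s) (b := N * (1 - 0)) hrs).tendsto
      have hexp : Tendsto (fun k : ℕ => N * (1 - a ^ k)) atTop (𝓝 (N * (1 - 0))) :=
        tendsto_const_nhds.mul (tendsto_const_nhds.sub h1)
      have := hc.comp hexp
      simpa [Function.comp_def] using this
    have hlim : Tendsto (fun k : ℕ => Kn * ρ ^ (a ^ k) * (r - s) ^ (N * (1 - a ^ k))) atTop
        (𝓝 (Kn * (r - s) ^ N)) := by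
      have := ((tendsto_const_nhds (x := Kn)).mul h2).mul h3
      simpa using this
    exact le_of_tendsto hlim
      (Eventually.of_forall (fun k => main k r ⟨hs.2.le, le_rfl⟩))
  -- limit s → lam⁺
  have hlim2 : Tendsto (fun s : ℝ => Kn * (r - s) ^ N) (𝓝[>] lam) (𝓝 (Kn * (r - lam) ^ N)) := by
    have hc : ContinuousAt (fun s : ℝ => Kn * (r - s) ^ N) lam := by
      apply ContinuousAt.mul continuousAt_const
      have h1 : ContinuousAt (fun x : ℝ => x ^ N) (r - lam) :=
        Real.continuousAt_rpow_const _ _ (Or.inl (sub_pos.2 hlr).ne')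
      exact h1.comp ((continuous_const.sub continuous_id).continuousAt)
    exact hc.tendsto.mono_left nhdsWithin_le_nhds
  have hfr : Kn * (r - lam) ^ N ≤ f r := by
    refine le_of_tendsto hlim2 ?_
    filter_upwards [Ioo_mem_nhdsGT_of_mem (show lam ∈ Ico lam r from ⟨le_rfl, hlr⟩)] with s hs
    exact claim s hs
  have h9 : (C ^ (-(N - 1) / N) / N) ^ n * (r - lam) ^ n = Kn * (r - lam) ^ N := by
    rw [show -(N - 1) / N = -a by rw [hadef, neg_div], ← hKdef, hKndef,
      ← Real.rpow_natCast K n, ← Real.rpow_natCast (r - lam) n, hNdef]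
  rw [h9]
  exact hfr
end

section
/- Let (X, μ) and (Y, ν) be finite measure spaces, d : X × Y → [0, ∞) a measurable symmetric function (a distance), r > 0, and suppose: (a) for every p ∈ X, ν({q ∈ Y : d(p,q) ≤ r}) ≥ a; (b) for every q ∈ Y, μ({p ∈ X : d(p,q) ≤ r}) ≤ b. Then ν({q ∈ Y : ∃ p ∈ X, d(p,q) ≤ r}) ≥ (a/b)·μ(X). -/
open MeasureTheory ENNReal

/-- Abstract Fubini/double-counting lemma underlying the almost-full-measure
inequality: if every `p ∈ X` has a `ν`-mass at least `a` of points of `Y` within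
distance `r`, while every `q ∈ Y` sees `μ`-mass at most `b` of points of `X` within
distance `r`, then the set of points of `Y` within distance `r` of `X` has `ν`-measure
at least `(a/b) μ(X)`. -/
theorem stmt11 (X Y : Type*) [MeasurableSpace X] [MeasurableSpace Y]
    (μ : Measure X) (ν : Measure Y) [IsFiniteMeasure μ] [IsFiniteMeasure ν]
    (d : X → Y → ℝ) (hd : Measurable (Function.uncurry d))
    (hdnn : ∀ p q, 0 ≤ d p q) (r : ℝ) (hr : 0 < r)
    (a b : ℝ≥0∞) (hb0 : b ≠ 0) (hbtop : b ≠ ⊤)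
    (ha : ∀ p : X, a ≤ ν {q | d p q ≤ r})
    (hbb : ∀ q : Y, μ {p | d p q ≤ r} ≤ b) :
    (a / b) * μ Set.univ ≤ ν {q | ∃ p : X, d p q ≤ r} := by
  set S : Set (X × Y) := {pq | d pq.1 pq.2 ≤ r} with hSdef
  have hS : MeasurableSet S := measurableSet_le hd measurable_const
  set E : Set Y := {q | ∃ p : X, d p q ≤ r}
  have h1 : a * μ Set.univ ≤ (μ.prod ν) S := by
    rw [Measure.prod_apply hS]
    calc a * μ Set.univ = ∫⁻ _, a ∂μ := by rw [lintegral_const, mul_comm]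
    _ ≤ ∫⁻ p, ν (Prod.mk p ⁻¹' S) ∂μ := by
        refine lintegral_mono fun p => ?_
        exact ha p
  have h2 : (μ.prod ν) S ≤ b * ν E := by
    rw [Measure.prod_apply_symm hS]
    calc ∫⁻ q, μ ((fun p => (p, q)) ⁻¹' S) ∂ν
        ≤ ∫⁻ q, E.indicator (fun _ => b) q ∂ν := by
          refine lintegral_mono fun q => ?_
          by_cases hq : q ∈ E
          · rw [Set.indicator_of_mem hq]; exact hbb q
          · rw [Set.indicator_of_notMem hq]
            have : ((fun p => (p, q)) ⁻¹' S) = ∅ := by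
              ext p
              simp only [Set.mem_preimage, Set.mem_empty_iff_false, iff_false]
              intro hp
              exact hq ⟨p, hp⟩
            simp [this]
    _ ≤ b * ν E := lintegral_indicator_const_le E b
  have key : a * μ Set.univ ≤ b * ν E := h1.trans h2
  calc a / b * μ Set.univ = a * μ Set.univ / b := by
        rw [div_eq_mul_inv, div_eq_mul_inv, mul_right_comm]
  _ ≤ b * ν E / b := ENNReal.div_le_div_right key b
  _ = ν E := by rw [mul_div_assoc]; exact ENNReal.mul_div_cancel hb0 hbtop
end
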